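/- If a nonnegative random variable Z satisfies P(Z ≥ (1+δ) E Z) ≤ (e^δ/(1+δ)^{1+δ})^{E Z} for all δ > 0, then for any α ∈ (0,1), with probability at least 1 − α, Z ≤ (√(E Z) + √(log(1/α)))². -/

import Mathlib

open MeasureTheory
open scoped ProbabilityTheory

/-- If a nonnegative random variable with positive mean satisfies the multiplicative
Chernoff tail bound `P(Z ≥ (1+δ)EZ) ≤ exp(EZ(δ − (1+δ)log(1+δ)))` for all `δ > 0`, then
for any `α ∈ (0,1)`, with probability at least `1 − α`, `Z ≤ (√(EZ) + √(log(1/α)))²`. -/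
theorem chernoff_to_quantile {Ω : Type*} [MeasureSpace Ω] [IsProbabilityMeasure (ℙ : Measure Ω)]
    (Z : Ω → ℝ) (hZint : Integrable Z) (hZpos : ∀ ω, 0 ≤ Z ω) (hmean : 0 < ∫ ω, Z ω)
    (htail : ∀ δ : ℝ, 0 < δ →
      ℙ {ω | (1 + δ) * ∫ ω', Z ω' ≤ Z ω}
        ≤ ENNReal.ofReal (Real.exp ((∫ ω', Z ω') * (δ - (1 + δ) * Real.log (1 + δ)))))
    (α : ℝ) (hα : α ∈ Set.Ioo (0:ℝ) 1) :
    ENNReal.ofReal (1 - α)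
      ≤ ℙ {ω | Z ω ≤ (Real.sqrt (∫ ω', Z ω') + Real.sqrt (Real.log (1 / α))) ^ 2} := by
  obtain ⟨hα0, hα1⟩ := hα
  set m : ℝ := ∫ ω', Z ω' with hm
  have hm0 : 0 < m := hmean
  set L : ℝ := Real.log (1 / α) with hLdef
  have hL0 : 0 < L := Real.log_pos (by rw [lt_div_iff₀ hα0]; linarith)
  have hsm : 0 < Real.sqrt m := Real.sqrt_pos.mpr hm0
  have hsL : 0 < Real.sqrt L := Real.sqrt_pos.mpr hL0
  set u : ℝ := (Real.sqrt m + Real.sqrt L) / Real.sqrt m with hu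
  have hu1 : 1 < u := by
    rw [hu, lt_div_iff₀ hsm]
    linarith
  have hu0 : 0 < u := by linarith
  set δ : ℝ := u ^ 2 - 1 with hδdef
  have hδ : 0 < δ := by nlinarith
  have hsqm : Real.sqrt m ^ 2 = m := Real.sq_sqrt hm0.le
  have hsqL : Real.sqrt L ^ 2 = L := Real.sq_sqrt hL0.le
  have hkey : (1 + δ) * m = (Real.sqrt m + Real.sqrt L) ^ 2 := by
    have h : (1 + δ) = u ^ 2 := by rw [hδdef]; ring
    rw [h, hu, div_pow, hsqm, div_mul_cancel₀ _ hm0.ne']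
  -- the analytic inequality
  have hlogu : u - 1 ≤ u * Real.log u := by
    have h1 : Real.log u⁻¹ ≤ u⁻¹ - 1 := Real.log_le_sub_one_of_pos (by positivity)
    rw [Real.log_inv] at h1
    have h2 : u * (u⁻¹ - 1) = 1 - u := by field_simp
    nlinarith [h1, h2]
  have hlog1δ : Real.log (1 + δ) = 2 * Real.log u := by
    have : (1 : ℝ) + δ = u ^ 2 := by rw [hδdef]; ring
    rw [this, Real.log_pow]; push_cast; ring
  have hexp : m * (δ - (1 + δ) * Real.log (1 + δ)) ≤ Real.log α := by
    have hmL : m * (u - 1) ^ 2 = L := by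
      have : u - 1 = Real.sqrt L / Real.sqrt m := by
        rw [hu]; field_simp; ring
      rw [this, div_pow, hsqL, hsqm]; field_simp
    have hlogα : Real.log α = -L := by
      rw [hLdef, one_div, Real.log_inv, neg_neg]
    rw [hlogα, hlog1δ, hδdef]
    have h3 : u * (u - 1) ≤ u ^ 2 * Real.log u := by nlinarith [hlogu, hu0]
    nlinarith [hmL, h3, hm0]
  have htailα : ℙ {ω | (1 + δ) * m ≤ Z ω} ≤ ENNReal.ofReal α := by
    refine (htail δ hδ).trans ?_
    apply ENNReal.ofReal_le_ofReal
    calc Real.exp (m * (δ - (1 + δ) * Real.log (1 + δ)))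
        ≤ Real.exp (Real.log α) := Real.exp_le_exp.mpr hexp
      _ = α := Real.exp_log hα0
  set A : Set Ω := {ω | Z ω ≤ (Real.sqrt m + Real.sqrt L) ^ 2} with hA
  have hcompl : Aᶜ ⊆ {ω | (1 + δ) * m ≤ Z ω} := by
    intro ω hω
    simp only [hA, Set.mem_compl_iff, Set.mem_setOf_eq, not_le] at hω
    simp only [Set.mem_setOf_eq, hkey]
    exact hω.le
  have hAc : ℙ Aᶜ ≤ ENNReal.ofReal α := (measure_mono hcompl).trans htailα
  have hone : (1 : ENNReal) ≤ ℙ A + ℙ Aᶜ := by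
    have := measure_union_le (μ := (ℙ : Measure Ω)) A Aᶜ
    rwa [Set.union_compl_self, measure_univ] at this
  calc ENNReal.ofReal (1 - α) = 1 - ENNReal.ofReal α := by
        rw [ENNReal.ofReal_sub _ hα0.le, ENNReal.ofReal_one]
    _ ≤ 1 - ℙ Aᶜ := tsub_le_tsub_left hAc 1
    _ ≤ ℙ A := by
        rw [tsub_le_iff_right]
        exact hone.trans (by rw [add_comm])
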